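/- Let f : ℕ → ℂ satisfy f(2n) = f(n) for every n ≥ 1. If there exists a rational function R ∈ RatFunc ℂ whose Laurent expansion at 0 is the power series Σ_{n≥0} f(n) X^n (i.e. a_k(R) = f(k) for all k ≥ 0 and a_k(R) = 0 for all k < 0), then the denominator of R (in lowest terms) is squarefree; equivalently, all poles of R are simple. -/

import Mathlib

open Polynomial Finset

section Stmt17Aux

/-- The "substitute `X^2`" operation on power series. -/
noncomputable def D17 (u : PowerSeries ℂ) : PowerSeries ℂ :=
  PowerSeries.mk fun n => if 2 ∣ n then PowerSeries.coeff (n / 2) u else 0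

lemma coeff_D17 (u : PowerSeries ℂ) (n : ℕ) :
    PowerSeries.coeff n (D17 u) = if 2 ∣ n then PowerSeries.coeff (n / 2) u else 0 :=
  PowerSeries.coeff_mk _ _

lemma D17_mul (u v : PowerSeries ℂ) : D17 (u * v) = D17 u * D17 v := by
  ext n
  rw [coeff_D17]
  by_cases hn : 2 ∣ n
  · obtain ⟨m, rfl⟩ := hn
    rw [if_pos (Dvd.intro m rfl), Nat.mul_div_cancel_left m (by norm_num),
      PowerSeries.coeff_mul, PowerSeries.coeff_mul]
    have hinj : Set.InjOn (fun q : ℕ × ℕ => (2 * q.1, 2 * q.2)) (antidiagonal m) := by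
      intro x _ y _ h
      simp only [Prod.mk.injEq, Prod.ext_iff] at h ⊢
      omega
    rw [show (∑ p ∈ antidiagonal m, PowerSeries.coeff p.1 u * PowerSeries.coeff p.2 v)
        = ∑ p ∈ (antidiagonal m).image (fun q : ℕ × ℕ => (2 * q.1, 2 * q.2)),
            PowerSeries.coeff p.1 (D17 u) * PowerSeries.coeff p.2 (D17 v) by
      rw [Finset.sum_image hinj]
      refine Finset.sum_congr rfl fun q _ => ?_
      rw [coeff_D17, coeff_D17, if_pos (Dvd.intro q.1 rfl), if_pos (Dvd.intro q.2 rfl),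
        Nat.mul_div_cancel_left _ (by norm_num), Nat.mul_div_cancel_left _ (by norm_num)]]
    apply Finset.sum_subset
    · intro p hp
      simp only [Finset.mem_image, Finset.HasAntidiagonal.mem_antidiagonal] at hp ⊢
      obtain ⟨q, hq, rfl⟩ := hp
      omega
    · intro p hp hp'
      simp only [Finset.mem_image, Finset.HasAntidiagonal.mem_antidiagonal, Prod.ext_iff] at hp hp'
      by_cases h1 : 2 ∣ p.1
      · have h2 : 2 ∣ p.2 := by omega
        exfalso
        obtain ⟨a, ha⟩ := h1
        obtain ⟨b, hb⟩ := h2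
        exact hp' ⟨(a, b), by omega, by omega, by omega⟩
      · rw [coeff_D17, if_neg h1, zero_mul]
  · rw [if_neg hn, PowerSeries.coeff_mul]
    symm
    apply Finset.sum_eq_zero
    intro p hp
    rw [Finset.HasAntidiagonal.mem_antidiagonal] at hp
    by_cases h1 : 2 ∣ p.1
    · have h2 : ¬ 2 ∣ p.2 := by omega
      rw [coeff_D17 v, if_neg h2, mul_zero]
    · rw [coeff_D17, if_neg h1, zero_mul]

lemma D17_coe (A : Polynomial ℂ) :
    D17 (A : PowerSeries ℂ) = ((Polynomial.expand ℂ 2 A : Polynomial ℂ) : PowerSeries ℂ) := by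
  ext n
  rw [coeff_D17, Polynomial.coeff_coe, Polynomial.coeff_coe,
    Polynomial.coeff_expand (by norm_num)]

lemma coeff_comp_neg17 (A : Polynomial ℂ) (n : ℕ) :
    (A.comp (-X)).coeff n = (-1) ^ n * A.coeff n := by
  induction A using Polynomial.induction_on' with
  | add p q hp hq => simp [add_comp, hp, hq, mul_add]
  | monomial k a =>
    rw [monomial_comp, neg_pow, coeff_monomial]
    rw [show C a * ((-1) ^ k * X ^ k) = C ((-1)^k * a) * X ^ k by
      rw [map_mul, map_pow, map_neg, map_one]; ring]
    rw [coeff_C_mul, coeff_X_pow]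
    by_cases h : k = n
    · subst h; simp
    · simp [h, Ne.symm h]

lemma neg_coe17 (A : Polynomial ℂ) :
    ((A.comp (-X) : Polynomial ℂ) : PowerSeries ℂ)
      = PowerSeries.rescale (-1) (A : PowerSeries ℂ) := by
  ext n
  rw [Polynomial.coeff_coe, coeff_comp_neg17, PowerSeries.coeff_rescale, Polynomial.coeff_coe]

lemma rootMult_eq17 {A B : Polynomial ℂ} {β : ℂ} (k : ℕ)
    (hA : A = (X - C β) ^ k * B) (hB : B.eval β ≠ 0) :
    A.rootMultiplicity β = k := by
  have hB0 : B ≠ 0 := fun h => hB (by simp [h])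
  rw [hA, mul_comm, rootMultiplicity_mul_X_sub_C_pow hB0,
    rootMultiplicity_eq_zero (fun h => hB h), zero_add]

lemma prod_shift17 {L : ℕ} (g : ℕ → ℂ) (hg : g L = g 0) (hg0 : g 0 ≠ 0) :
    ∏ t ∈ range L, g (t + 1) = ∏ t ∈ range L, g t := by
  have h1 : (∏ t ∈ range L, g (t + 1)) * g 0 = (∏ t ∈ range L, g t) * g 0 := by
    rw [← Finset.prod_range_succ', Finset.prod_range_succ, hg]
  exact mul_right_cancel₀ hg0 h1

end Stmt17Aux

/-- The `n`-th coefficient of the Laurent expansion at `0` of a rational function. -/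
noncomputable def coeffL (R : RatFunc ℂ) (n : ℤ) : ℂ :=
  ((R : LaurentSeries ℂ)).coeff n

theorem stmt_17 (f : ℕ → ℂ) (hf : ∀ n : ℕ, 1 ≤ n → f (2 * n) = f n)
    (R : RatFunc ℂ)
    (hcoeff : ∀ k : ℕ, coeffL R (k : ℤ) = f k)
    (hneg : ∀ k : ℤ, k < 0 → coeffL R k = 0) :
    Squarefree R.denom := by
  set F : PowerSeries ℂ := PowerSeries.mk f with hFdef
  -- Step 1: the Laurent series of R is the power series F
  have hRF : (R : LaurentSeries ℂ) = ((F : PowerSeries ℂ) : LaurentSeries ℂ) := by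
    ext n
    rw [PowerSeries.coeff_coe]
    rcases lt_or_ge n 0 with h | h
    · rw [if_pos h]
      exact hneg n h
    · rw [if_neg (not_lt.mpr h)]
      have h1 := hcoeff n.natAbs
      rw [Int.natAbs_of_nonneg h] at h1
      rw [hFdef, PowerSeries.coeff_mk]
      exact h1
  -- Step 2: denominator times F equals numerator, as power series
  have hQF : ((R.denom : PowerSeries ℂ)) * F = ((R.num : PowerSeries ℂ)) := by
    apply HahnSeries.ofPowerSeries_injective (Γ := ℤ) (R := ℂ)
    have hd : (algebraMap ℂ[X] (RatFunc ℂ)) R.denom ≠ 0 :=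
      RatFunc.algebraMap_ne_zero R.denom_ne_zero
    have h1 : algebraMap ℂ[X] (RatFunc ℂ) R.denom * R = algebraMap ℂ[X] (RatFunc ℂ) R.num := by
      have h0 := (div_eq_iff hd).mp (RatFunc.num_div_denom R)
      rw [mul_comm]
      exact h0.symm
    have h2 := congrArg (fun x : RatFunc ℂ => (x : LaurentSeries ℂ)) h1
    simp only [map_mul] at h2
    rw [hRF] at h2
    have h3 : ∀ A : ℂ[X], ((algebraMap ℂ[X] (RatFunc ℂ) A : RatFunc ℂ) : LaurentSeries ℂ)
        = HahnSeries.ofPowerSeries ℤ ℂ (A : PowerSeries ℂ) := by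
      intro A
      exact (RatFunc.coe_coe A).symm
    rw [h3, h3] at h2
    rw [map_mul]
    exact h2
  set Qp : ℂ[X] := R.denom with hQpdef
  set Pp : ℂ[X] := R.num with hPpdef
  set Qn : ℂ[X] := Qp.comp (-X) with hQndef
  set Pn : ℂ[X] := Pp.comp (-X) with hPndef
  set Q2 : ℂ[X] := Polynomial.expand ℂ 2 Qp with hQ2def
  set P2 : ℂ[X] := Polynomial.expand ℂ 2 Pp with hP2def
  have hQ0 : Qp ≠ 0 := R.denom_ne_zero
  -- negated and doubled equations
  have hn' : ((Qn : PowerSeries ℂ)) * (PowerSeries.rescale (-1) F) = ((Pn : PowerSeries ℂ)) := by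
    rw [hQndef, hPndef, neg_coe17, neg_coe17, ← map_mul, hQF]
  have hd' : ((Q2 : PowerSeries ℂ)) * D17 F = ((P2 : PowerSeries ℂ)) := by
    rw [hQ2def, hP2def, ← D17_coe, ← D17_coe, ← D17_mul, hQF]
  -- the functional equation from hf
  have hFF : F + PowerSeries.rescale (-1) F = 2 * D17 F := by
    rw [hFdef]
    ext n
    simp only [map_add, PowerSeries.coeff_rescale, PowerSeries.coeff_mk, two_mul, coeff_D17]
    rcases Nat.even_or_odd n with ⟨m, rfl⟩ | ho
    · rw [if_pos ⟨m, by omega⟩, show (m + m) / 2 = m by omega, Even.neg_one_pow ⟨m, rfl⟩]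
      have hfm : f (m + m) = f m := by
        rcases Nat.eq_zero_or_pos m with rfl | hm
        · rfl
        · rw [show m + m = 2 * m by ring]; exact hf m hm
      rw [hfm]; ring
    · have hn2 : ¬ 2 ∣ n := by rcases ho with ⟨k, rfl⟩; omega
      rw [if_neg hn2, Odd.neg_one_pow ho]; ring
  -- the master polynomial identity
  have hstar : Qp * Qn * P2 + Qp * Qn * P2 = (Qn * Pp + Qp * Pn) * Q2 := by
    have hser : ((Qp * Qn * P2 + Qp * Qn * P2 : ℂ[X]) : PowerSeries ℂ)
        = (((Qn * Pp + Qp * Pn) * Q2 : ℂ[X]) : PowerSeries ℂ) := by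
      push_cast
      linear_combination ((Qn : PowerSeries ℂ) * (Q2 : PowerSeries ℂ)) * hQF
        + ((Qp : PowerSeries ℂ) * (Q2 : PowerSeries ℂ)) * hn'
        - 2 * ((Qp : PowerSeries ℂ) * (Qn : PowerSeries ℂ)) * hd'
        - ((Qp : PowerSeries ℂ) * (Qn : PowerSeries ℂ) * (Q2 : PowerSeries ℂ)) * hFF
    exact_mod_cast hser
  -- coprimality and basic facts
  have hcop : IsCoprime Pp Qp := R.isCoprime_num_denom
  have hQc0 : Qp.coeff 0 ≠ 0 := by
    intro h0
    have hXQ : (X : ℂ[X]) ∣ Qp := X_dvd_iff.mpr h0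
    have hP0 : Pp.coeff 0 = 0 := by
      have hc := congrArg (PowerSeries.constantCoeff) hQF
      rw [map_mul] at hc
      rw [← Polynomial.coeff_coe Pp 0, PowerSeries.coeff_zero_eq_constantCoeff, ← hc,
        ← PowerSeries.coeff_zero_eq_constantCoeff_apply, Polynomial.coeff_coe, h0, zero_mul]
    have hXP : (X : ℂ[X]) ∣ Pp := X_dvd_iff.mpr hP0
    exact Polynomial.not_isUnit_X (hcop.isUnit_of_dvd' hXP hXQ)
  -- equation (1): Qp * Qn = C c * Q2
  have hQnQ : Qn.comp (-X) = Qp := by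
    rw [hQndef, comp_assoc, neg_comp, X_comp, neg_neg, comp_X]
  have hQn0 : Qn ≠ 0 := by
    intro h
    apply hQ0
    rw [← hQnQ, h, zero_comp]
  have hQ20 : Q2 ≠ 0 := by
    rw [hQ2def]
    exact (Polynomial.expand_ne_zero (by norm_num)).mpr hQ0
  have hcop2 : IsCoprime P2 Q2 := by
    rw [hP2def, hQ2def]
    obtain ⟨x, y, hxy⟩ := hcop
    exact ⟨Polynomial.expand ℂ 2 x, Polynomial.expand ℂ 2 y, by
      rw [← map_mul, ← map_mul, ← map_add, hxy, map_one]⟩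
  obtain ⟨c, hc0, heq1⟩ : ∃ c : ℂ, c ≠ 0 ∧ Qp * Qn = C c * Q2 := by
    have hdvd0 : Q2 ∣ (Qp * Qn + Qp * Qn) * P2 :=
      ⟨Qn * Pp + Qp * Pn, by linear_combination hstar⟩
    have hdvd1 : Q2 ∣ Qp * Qn + Qp * Qn := (hcop2.symm).dvd_of_dvd_mul_right hdvd0
    have hdvd : Q2 ∣ Qp * Qn := by
      rw [show Qp * Qn + Qp * Qn = 2 * (Qp * Qn) by ring] at hdvd1
      exact (IsUnit.dvd_mul_left (by
        rw [← map_ofNat (C : ℂ →+* ℂ[X]) 2]; exact isUnit_C.mpr (by norm_num))).mp hdvd1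
    obtain ⟨k, hk⟩ := hdvd
    have hk0 : k ≠ 0 := by
      intro h
      rw [h, mul_zero] at hk
      exact (mul_ne_zero hQ0 hQn0) hk
    have hdegk : k.natDegree = 0 := by
      have d1 : (Qp * Qn).natDegree = Qp.natDegree * 2 := by
        rw [natDegree_mul hQ0 hQn0, hQndef, natDegree_comp]
        simp only [natDegree_neg, natDegree_X, mul_one]
        omega

      have d2 : Q2.natDegree = Qp.natDegree * 2 := by
        rw [hQ2def, natDegree_expand]
      have d3 : (Qp * Qn).natDegree = Q2.natDegree + k.natDegree := by
        rw [hk, natDegree_mul hQ20 hk0]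
      omega
    obtain ⟨c, hc⟩ := Polynomial.natDegree_eq_zero.mp hdegk
    refine ⟨c, ?_, by rw [hk, ← hc]; ring⟩
    intro h
    rw [h, map_zero] at hc
    exact hk0 hc.symm
  -- equation (2): Qn * Pp + Qp * Pn = 2 * C c * P2
  have heq2 : Qn * Pp + Qp * Pn = 2 * C c * P2 := by
    apply mul_right_cancel₀ hQ20
    rw [← hstar, heq1]
    ring
  -- key multiplicity relation
  have hmrel : ∀ β : ℂ, β ≠ 0 →
      Qp.rootMultiplicity β + Qp.rootMultiplicity (-β) = Qp.rootMultiplicity (β ^ 2) := by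
    intro β hβ
    have hCc0 : (C c : ℂ[X]) ≠ 0 := by simpa using hc0
    have hL : (Qp * Qn).rootMultiplicity β
        = Qp.rootMultiplicity β + Qp.rootMultiplicity (-β) := by
      rw [rootMultiplicity_mul (mul_ne_zero hQ0 hQn0)]
      congr 1
      set k := Qp.rootMultiplicity (-β) with hk
      have hfac := pow_mul_divByMonic_rootMultiplicity_eq Qp (-β)
      set W := Qp /ₘ (X - C (-β)) ^ k with hW
      have hWe : W.eval (-β) ≠ 0 := eval_divByMonic_pow_rootMultiplicity_ne_zero (-β) hQ0
      apply rootMult_eq17 k (B := (-1) ^ k * W.comp (-X))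
      · rw [hQndef]
        conv_lhs => rw [← hfac]
        rw [mul_comp, pow_comp, sub_comp, X_comp, C_comp, map_neg]
        rw [show ((-X : ℂ[X]) - - C β) = -(X - C β) by ring, neg_pow]
        ring
      · simp only [eval_mul, eval_pow, eval_neg, eval_one, eval_comp, eval_X]
        exact mul_ne_zero (pow_ne_zero _ (by norm_num)) hWe
    have hR : (C c * Q2).rootMultiplicity β = Qp.rootMultiplicity (β ^ 2) := by
      rw [rootMultiplicity_mul (mul_ne_zero hCc0 hQ20), rootMultiplicity_C, zero_add]
      set k := Qp.rootMultiplicity (β ^ 2) with hk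
      have hfac := pow_mul_divByMonic_rootMultiplicity_eq Qp (β ^ 2)
      set V := Qp /ₘ (X - C (β ^ 2)) ^ k with hV
      have hVe : V.eval (β ^ 2) ≠ 0 := eval_divByMonic_pow_rootMultiplicity_ne_zero _ hQ0
      apply rootMult_eq17 k (B := (X + C β) ^ k * Polynomial.expand ℂ 2 V)
      · rw [hQ2def]
        conv_lhs => rw [← hfac]
        rw [map_mul, map_pow, map_sub, Polynomial.expand_X, Polynomial.expand_C]
        rw [show ((X : ℂ[X]) ^ 2 - C (β ^ 2)) = (X - C β) * (X + C β) by
          rw [map_pow]; ring]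
        rw [mul_pow]; ring
      · rw [eval_mul, eval_pow, eval_add, eval_X, eval_C, Polynomial.expand_eval]
        exact mul_ne_zero (pow_ne_zero _ (by
          intro h; exact hβ (by linear_combination h / 2))) hVe
    rw [← hL, heq1]
    exact hR
  -- proof by contradiction
  intro g hg2
  by_contra hgu
  have hg0 : g ≠ 0 := by
    intro h
    rw [h, mul_zero] at hg2
    exact hQ0 (zero_dvd_iff.mp hg2)
  have hgdeg : g.degree ≠ 0 := fun hdeg => hgu (isUnit_iff_degree_eq_zero.mpr hdeg)
  obtain ⟨α, hαroot⟩ := IsAlgClosed.exists_root g hgdeg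
  have hα2 : 2 ≤ Qp.rootMultiplicity α := by
    rw [le_rootMultiplicity_iff hQ0]
    calc ((X : ℂ[X]) - C α) ^ 2 = (X - C α) * (X - C α) := sq (X - C α)
    _ ∣ g * g := mul_dvd_mul (dvd_iff_isRoot.mpr hαroot) (dvd_iff_isRoot.mpr hαroot)
    _ ∣ Qp := hg2
  classical
  -- maximal multiplicity
  have hroots_ne : Qp.roots.toFinset.Nonempty := by
    refine ⟨α, ?_⟩
    rw [Multiset.mem_toFinset, mem_roots hQ0]
    exact (rootMultiplicity_pos hQ0).mp (by omega)
  obtain ⟨α₀, hα₀mem, hα₀max⟩ :=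
    Qp.roots.toFinset.exists_max_image (fun z => Qp.rootMultiplicity z) hroots_ne
  set d : ℕ := Qp.rootMultiplicity α₀ with hd
  have hmax : ∀ z : ℂ, Qp.rootMultiplicity z ≤ d := by
    intro z
    by_cases hz : z ∈ Qp.roots.toFinset
    · exact hα₀max z hz
    · have hnr : ¬ Qp.IsRoot z := by
        intro hr
        exact hz (by rw [Multiset.mem_toFinset, mem_roots hQ0]; exact hr)
      rw [rootMultiplicity_eq_zero hnr]
      exact Nat.zero_le _
  have hd2 : 2 ≤ d := le_trans hα2 (hmax α)
  have hα₀0 : α₀ ≠ 0 := by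
    intro h
    apply hQc0
    rw [coeff_zero_eq_eval_zero]
    have hpos : 0 < Qp.rootMultiplicity α₀ := by omega
    have := (rootMultiplicity_pos hQ0).mp hpos
    rw [h] at this
    exact this
  -- the orbit under squaring
  set s : ℕ → ℂ := fun k => α₀ ^ (2 ^ k) with hs
  have hs0 : ∀ k, s k ≠ 0 := fun k => pow_ne_zero _ hα₀0
  have hssucc : ∀ k, s (k + 1) = (s k) ^ 2 := by
    intro k
    simp only [hs]
    rw [← pow_mul, pow_succ]
  have hsd : ∀ k, Qp.rootMultiplicity (s k) = d := by
    intro k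
    induction k with
    | zero =>
      simp only [hs, pow_zero, pow_one]
      exact hd.symm
    | succ n ih =>
      have h1 := hmrel (s n) (hs0 n)
      have h3 := hmax ((s n) ^ 2)
      rw [hssucc]
      omega
  have hsneg : ∀ k, Qp.rootMultiplicity (-(s k)) = 0 := by
    intro k
    have h1 := hmrel (s k) (hs0 k)
    have h3 := hmax ((s k) ^ 2)
    have h4 := hsd k
    omega
  -- pigeonhole
  have hmem : ∀ k : ℕ, k ∈ (Set.univ : Set ℕ) → s k ∈ (Qp.roots.toFinset : Set ℂ) := by
    intro k _
    rw [Finset.mem_coe, Multiset.mem_toFinset, mem_roots hQ0]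
    apply (rootMultiplicity_pos hQ0).mp
    rw [hsd k]
    omega
  obtain ⟨i, -, j, -, hij0, hsij⟩ :=
    Set.infinite_univ.exists_ne_map_eq_of_mapsTo hmem Qp.roots.toFinset.finite_toSet
  have hpig : ∃ i j : ℕ, i < j ∧ s i = s j := by
    rcases hij0.lt_or_gt with h | h
    · exact ⟨i, j, h, hsij⟩
    · exact ⟨j, i, h, hsij.symm⟩
  clear hij0 hsij
  obtain ⟨i, j, hij, hsij⟩ := hpig
  -- the cycle
  set L : ℕ := j - i with hLdef
  have hL1 : 1 ≤ L := by omega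
  set γ : ℕ → ℂ := fun t => s (i + t) with hγ
  have hγsucc : ∀ t, γ (t + 1) = (γ t) ^ 2 := by
    intro t
    simp only [hγ]
    rw [show i + (t + 1) = (i + t) + 1 by ring]
    exact hssucc _
  have hγL : γ L = γ 0 := by
    simp only [hγ]
    rw [show i + L = j by omega, Nat.add_zero]
    exact hsij.symm
  have hγd : ∀ t, Qp.rootMultiplicity (γ t) = d := fun t => hsd _
  have hγneg : ∀ t, Qp.rootMultiplicity (-(γ t)) = 0 := fun t => hsneg _
  have hγ0 : ∀ t, γ t ≠ 0 := fun t => hs0 _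
  -- local data at cycle points
  set U : ℕ → ℂ[X] := fun t => Qp /ₘ (X - C (γ t)) ^ d with hU
  set u : ℕ → ℂ := fun t => (U t).eval (γ t) with hu
  set q : ℕ → ℂ := fun t => Qp.eval (-(γ t)) with hq
  set a : ℕ → ℂ := fun t => Pp.eval (γ t) with ha
  have hfacQ : ∀ t, Qp = (X - C (γ t)) ^ d * U t := by
    intro t
    have h1 := pow_mul_divByMonic_rootMultiplicity_eq Qp (γ t)
    rw [hγd t] at h1
    simp only [hU]
    exact h1.symm
  have hune : ∀ t, u t ≠ 0 := by
    intro t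
    have h1 := eval_divByMonic_pow_rootMultiplicity_ne_zero (γ t) hQ0
    rw [hγd t] at h1
    simpa only [hu, hU] using h1
  have hrootQ : ∀ t, Qp.eval (γ t) = 0 := by
    intro t
    have hpos : 0 < Qp.rootMultiplicity (γ t) := by rw [hγd t]; omega
    exact (rootMultiplicity_pos hQ0).mp hpos
  have hqne : ∀ t, q t ≠ 0 := by
    intro t
    simp only [hq]
    intro h
    have h1 := (rootMultiplicity_pos hQ0).mpr h
    rw [hγneg t] at h1
    omega
  have hane : ∀ t, a t ≠ 0 := by
    intro t
    simp only [ha]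
    intro h
    obtain ⟨x, y, hxy⟩ := hcop
    have h1 := congrArg (Polynomial.eval (γ t)) hxy
    simp only [eval_add, eval_mul, eval_one, h, hrootQ t, mul_zero, add_zero, zero_add] at h1
    exact one_ne_zero h1.symm
  -- the two local identities
  have hI : ∀ t, u t * q t = c * (2 * γ t) ^ d * u (t + 1) := by
    intro t
    have hpoly : U t * Qn = C c * ((X + C (γ t)) ^ d * Polynomial.expand ℂ 2 (U (t + 1))) := by
      have e1 : (X - C (γ t)) ^ d * (U t * Qn) = Qp * Qn := by
        rw [← mul_assoc, ← hfacQ t]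
      have e2 : Q2 = (X - C (γ t)) ^ d * ((X + C (γ t)) ^ d * Polynomial.expand ℂ 2 (U (t + 1))) := by
        rw [hQ2def]
        conv_lhs => rw [hfacQ (t + 1)]
        rw [map_mul, map_pow, map_sub, Polynomial.expand_X, Polynomial.expand_C]
        rw [show ((X : ℂ[X]) ^ 2 - C (γ (t + 1))) = (X - C (γ t)) * (X + C (γ t)) by
          rw [hγsucc t, map_pow]; ring]
        rw [mul_pow]; ring
      have hcancel : (X - C (γ t)) ^ d * (U t * Qn)
          = (X - C (γ t)) ^ d * (C c * ((X + C (γ t)) ^ d * Polynomial.expand ℂ 2 (U (t + 1)))) := by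
        rw [e1, heq1, e2]; ring
      exact mul_left_cancel₀ (pow_ne_zero _ (X_sub_C_ne_zero (γ t))) hcancel
    rw [hQndef] at hpoly
    have hev := congrArg (Polynomial.eval (γ t)) hpoly
    simp only [eval_mul, eval_pow, eval_add, eval_comp, eval_neg, eval_X, eval_C,
      Polynomial.expand_eval] at hev
    show (U t).eval (γ t) * Qp.eval (-(γ t)) = c * (2 * γ t) ^ d * (U (t + 1)).eval (γ (t + 1))
    rw [hγsucc t]
    rw [show (2 : ℂ) * γ t = γ t + γ t by ring]
    linear_combination hev
  have hII : ∀ t, q t * a t = 2 * c * a (t + 1) := by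
    intro t
    have heq2' := heq2
    rw [hQndef, hPndef, hP2def] at heq2'
    have hev := congrArg (Polynomial.eval (γ t)) heq2'
    simp only [eval_add, eval_mul, eval_comp, eval_neg, eval_X, eval_C, eval_ofNat,
      Polynomial.expand_eval, hrootQ t, zero_mul, add_zero] at hev
    show Qp.eval (-(γ t)) * Pp.eval (γ t) = 2 * c * Pp.eval (γ (t + 1))
    rw [hγsucc t]
    linear_combination hev
  -- products around the cycle
  have huL : u L = u 0 := by simp only [hu, hU, hγL]
  have haL : a L = a 0 := by simp only [ha, hγL]
  have hπ0 : (∏ t ∈ Finset.range L, γ t) ≠ 0 :=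
    Finset.prod_ne_zero_iff.mpr fun t _ => hγ0 t
  have hprodγ : (∏ t ∈ Finset.range L, γ t) = 1 := by
    have hsq : (∏ t ∈ Finset.range L, γ t) * (∏ t ∈ Finset.range L, γ t)
        = (∏ t ∈ Finset.range L, γ t) * 1 := by
      rw [mul_one, ← Finset.prod_mul_distrib]
      calc (∏ t ∈ Finset.range L, (γ t * γ t)) = ∏ t ∈ Finset.range L, γ (t + 1) := by
            refine Finset.prod_congr rfl fun t _ => ?_
            rw [hγsucc t]; ring
      _ = ∏ t ∈ Finset.range L, γ t := prod_shift17 γ hγL (hγ0 0)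
    exact mul_left_cancel₀ hπ0 hsq
  have huprod0 : (∏ t ∈ Finset.range L, u t) ≠ 0 :=
    Finset.prod_ne_zero_iff.mpr fun t _ => hune t
  have haprod0 : (∏ t ∈ Finset.range L, a t) ≠ 0 :=
    Finset.prod_ne_zero_iff.mpr fun t _ => hane t
  have hqI : (∏ t ∈ Finset.range L, q t) = c ^ L * ((2 : ℂ) ^ L) ^ d := by
    have h1 : ∏ t ∈ Finset.range L, (u t * q t)
        = ∏ t ∈ Finset.range L, (c * (2 * γ t) ^ d * u (t + 1)) :=
      Finset.prod_congr rfl fun t _ => hI t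
    have h2 : ∏ t ∈ Finset.range L, (c * (2 * γ t) ^ d * u (t + 1))
        = c ^ L * ((2 : ℂ) ^ L) ^ d * ∏ t ∈ Finset.range L, u t := by
      rw [Finset.prod_mul_distrib, Finset.prod_mul_distrib, Finset.prod_pow,
        Finset.prod_mul_distrib, Finset.prod_const, Finset.prod_const, Finset.card_range,
        hprodγ, mul_one, prod_shift17 u huL (hune 0)]
    have h3 : (∏ t ∈ Finset.range L, u t) * (∏ t ∈ Finset.range L, q t)
        = c ^ L * ((2 : ℂ) ^ L) ^ d * ∏ t ∈ Finset.range L, u t := by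
      rw [← Finset.prod_mul_distrib, h1, h2]
    apply mul_left_cancel₀ huprod0
    linear_combination h3
  have hqII : (∏ t ∈ Finset.range L, q t) = (2 * c) ^ L := by
    have h1 : ∏ t ∈ Finset.range L, (q t * a t)
        = ∏ t ∈ Finset.range L, (2 * c * a (t + 1)) :=
      Finset.prod_congr rfl fun t _ => hII t
    have h2 : ∏ t ∈ Finset.range L, ((2 : ℂ) * c * a (t + 1))
        = (2 * c) ^ L * ∏ t ∈ Finset.range L, a t := by
      rw [Finset.prod_mul_distrib, Finset.prod_const, Finset.card_range,
        prod_shift17 a haL (hane 0)]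
    have h3 : (∏ t ∈ Finset.range L, q t) * (∏ t ∈ Finset.range L, a t)
        = (2 * c) ^ L * ∏ t ∈ Finset.range L, a t := by
      rw [← Finset.prod_mul_distrib, h1, h2]
    exact mul_right_cancel₀ haprod0 h3
  -- the contradiction
  have hfin : c ^ L * ((2 : ℂ) ^ L) ^ d = (2 * c) ^ L := by rw [← hqI, hqII]
  have h3 : ((2 : ℂ) ^ L) ^ d = (2 : ℂ) ^ L := by
    have hcL : (c : ℂ) ^ L ≠ 0 := pow_ne_zero _ hc0
    apply mul_left_cancel₀ hcL
    rw [hfin, mul_pow]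
    ring
  rw [← pow_mul] at h3
  have hnat : (2 : ℕ) ^ (L * d) = 2 ^ L := by exact_mod_cast h3
  have hLd := Nat.pow_right_injective (le_refl 2) hnat
  have hmul : L * 2 ≤ L * d := Nat.mul_le_mul_left L hd2
  omega
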